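/- Let S be a finite type and let the symmetric group Perm(S) act on reward vectors θ : S → ℝ by (σ · θ) = θ ∘ σ⁻¹. Let Θ be a set of reward vectors and let p₀, p₁ : (S → ℝ) → ℝ be arbitrary functions (the probabilities that the decision-maker chooses action set A₀ resp. A₁). Fix θ ∈ Θ and let Orbit_Θ(θ) := {θ' ∈ Θ | ∃ σ ∈ Perm(S), θ' = σ · θ}, and write O₊ := {θ' ∈ Orbit_Θ(θ) | p₁(θ') > p₀(θ')} and O₋ := {θ' ∈ Orbit_Θ(θ) | p₀(θ') > p₁(θ')}. Suppose there exists a finite set Φ of permutations of S with |Φ| = n such that: (1) for every φ ∈ Φ and every θ' ∈ O₋, p₁(φ · θ') > p₀(φ · θ'); (2) for every φ ∈ Φ and every θ' ∈ O₋, φ · θ' ∈ Θ; (3) for all distinct φ', φ'' ∈ Φ and all θ', θ'' ∈ O₋, φ' · θ' ≠ φ'' · θ''. Then |O₊| ≥ n · |O₋| (cardinalities are finite since the orbit of θ under the finite group Perm(S) is finite). -/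
import Mathlib


/-- The action of a permutation `σ` of states on a reward vector `θ : S → ℝ`,
given by `(σ · θ) s = θ (σ⁻¹ s)`. -/
def permAct {S : Type*} (σ : Equiv.Perm S) (θ : S → ℝ) : S → ℝ := θ ∘ ⇑σ⁻¹

/-- The orbit of `θ` inside `Θ`: all permuted copies of `θ` lying in `Θ`. -/
def orbitIn {S : Type*} (Θ : Set (S → ℝ)) (θ : S → ℝ) : Set (S → ℝ) :=
  {θ' ∈ Θ | ∃ σ : Equiv.Perm S, θ' = permAct σ θ}

/-- The subset of the orbit of `θ` inside `Θ` on which `pA` strictly exceeds `pB`. -/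
def orbitPref {S : Type*} (Θ : Set (S → ℝ)) (pA pB : (S → ℝ) → ℝ) (θ : S → ℝ) :
    Set (S → ℝ) :=
  {θ' ∈ orbitIn Θ θ | pA θ' > pB θ'}

lemma permAct_mul {S : Type*} (σ τ : Equiv.Perm S) (θ : S → ℝ) :
    permAct σ (permAct τ θ) = permAct (σ * τ) θ := by
  funext s
  simp [permAct, mul_inv_rev]

lemma permAct_injective {S : Type*} (σ : Equiv.Perm S) :
    Function.Injective (permAct (S := S) σ) := by
  intro x y h
  funext s
  have := congrFun h (σ s)
  simpa [permAct] using this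

/-- Multiply retargetable functions prefer action set `A₁` (RDSP Theorem 3.6):
given `n` retargeting permutations, the orbit subset preferring `A₁` is at least
`n` times as large as the orbit subset preferring `A₀`. -/
theorem retargetable_prefers_A1 {S : Type*} [Fintype S]
    (Θ : Set (S → ℝ)) (p₀ p₁ : (S → ℝ) → ℝ) (θ : S → ℝ) (hθ : θ ∈ Θ)
    (n : ℕ) (Φ : Finset (Equiv.Perm S)) (hΦ : Φ.card = n)
    (h1 : ∀ φ ∈ Φ, ∀ θ' ∈ orbitPref Θ p₀ p₁ θ,
      p₁ (permAct φ θ') > p₀ (permAct φ θ'))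
    (h2 : ∀ φ ∈ Φ, ∀ θ' ∈ orbitPref Θ p₀ p₁ θ, permAct φ θ' ∈ Θ)
    (h3 : ∀ φ' ∈ Φ, ∀ φ'' ∈ Φ, φ' ≠ φ'' →
      ∀ θ' ∈ orbitPref Θ p₀ p₁ θ, ∀ θ'' ∈ orbitPref Θ p₀ p₁ θ,
        permAct φ' θ' ≠ permAct φ'' θ'') :
    (orbitPref Θ p₁ p₀ θ).ncard ≥ n * (orbitPref Θ p₀ p₁ θ).ncard := by
  classical
  have hOfin : (orbitIn Θ θ).Finite := by
    have hsub : orbitIn Θ θ ⊆ Set.range (fun σ : Equiv.Perm S => permAct σ θ) := by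
      rintro x ⟨_, σ, rfl⟩; exact ⟨σ, rfl⟩
    exact (Set.finite_range _).subset hsub
  have hOmfin : (orbitPref Θ p₀ p₁ θ).Finite := hOfin.subset (fun x hx => hx.1)
  have hOpfin : (orbitPref Θ p₁ p₀ θ).Finite := hOfin.subset (fun x hx => hx.1)
  set A := hOmfin.toFinset with hA
  set B := hOpfin.toFinset with hB
  have hmemA : ∀ x, x ∈ A ↔ x ∈ orbitPref Θ p₀ p₁ θ := fun x => hOmfin.mem_toFinset
  have hmemB : ∀ x, x ∈ B ↔ x ∈ orbitPref Θ p₁ p₀ θ := fun x => hOpfin.mem_toFinset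
  have hinj : Set.InjOn (fun p : Equiv.Perm S × (S → ℝ) => permAct p.1 p.2)
      ↑(Φ ×ˢ A) := by
    rintro ⟨φ, x⟩ hp ⟨ψ, y⟩ hq h
    simp only [Finset.coe_product, Set.mem_prod, Finset.mem_coe] at hp hq
    by_cases hφψ : φ = ψ
    · subst hφψ
      simp only at h
      exact Prod.ext rfl (permAct_injective φ h)
    · exact absurd h (h3 φ hp.1 ψ hq.1 hφψ x ((hmemA x).mp hp.2) y ((hmemA y).mp hq.2))
  have himg : (Φ ×ˢ A).image (fun p : Equiv.Perm S × (S → ℝ) => permAct p.1 p.2) ⊆ B := by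
    intro z hz
    simp only [Finset.mem_image, Finset.mem_product] at hz
    obtain ⟨⟨φ, x⟩, ⟨hφ, hx⟩, rfl⟩ := hz
    have hxO : x ∈ orbitPref Θ p₀ p₁ θ := (hmemA x).mp hx
    obtain ⟨⟨hxΘ, σ, hσ⟩, hxlt⟩ := id hxO
    exact (hmemB _).mpr ⟨⟨h2 φ hφ _ hxO, φ * σ, by rw [hσ, permAct_mul]⟩, h1 φ hφ _ hxO⟩
  have hcard : (Φ ×ˢ A).card ≤ B.card := by
    calc (Φ ×ˢ A).card
        = ((Φ ×ˢ A).image (fun p : Equiv.Perm S × (S → ℝ) => permAct p.1 p.2)).card :=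
          (Finset.card_image_of_injOn hinj).symm
      _ ≤ B.card := Finset.card_le_card himg
  rw [Set.ncard_eq_toFinset_card _ hOpfin, Set.ncard_eq_toFinset_card _ hOmfin]
  calc n * hOmfin.toFinset.card = Φ.card * A.card := by rw [hΦ]
    _ = (Φ ×ˢ A).card := (Finset.card_product _ _).symm
    _ ≤ B.card := hcard
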